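/- Let q ∈ ℕ, d ∈ {1,2,4}, and for μ > d(q-1/2), let (μ)_λ be the generalized Pochhammer symbol. Then for all partitions λ and μ > d(q-1/2): (μ)_λ ≥ 2^{-dq(q-1)/2} · μ^{|λ|}. -/
import Mathlib


/-- The generalized Pochhammer symbol `(μ)_λ = ∏_{j=1}^q (μ - (d/2)(j-1))_{λ_j}`,
where `(a)_n` is the rising factorial. -/
noncomputable def genPochhammer (d q : ℕ) (μ : ℝ) (lam : Fin q → ℕ) : ℝ :=
  ∏ j : Fin q, (ascPochhammer ℝ (lam j)).eval (μ - (d : ℝ) / 2 * (j : ℕ))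

lemma ascPochhammer_eval_prod (a : ℝ) (n : ℕ) :
    (ascPochhammer ℝ n).eval a = ∏ i ∈ Finset.range n, (a + i) := by
  induction n with
  | zero => simp
  | succ n ih => rw [ascPochhammer_succ_eval, ih, Finset.prod_range_succ]

lemma factor_bound (μ a : ℝ) (hμ : 0 < μ) (ha : μ / 2 ≤ a) (m n : ℕ)
    (ham : μ ≤ a + m) :
    ((2 : ℝ) ^ m)⁻¹ * μ ^ n ≤ (ascPochhammer ℝ n).eval a := by
  rw [ascPochhammer_eval_prod]
  have h1 : (∏ i ∈ Finset.range n, (if i < m then μ / 2 else μ)) ≤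
      ∏ i ∈ Finset.range n, (a + i) := by
    apply Finset.prod_le_prod
    · intro i _
      split_ifs <;> positivity
    · intro i hi
      split_ifs with h
      · have : (0:ℝ) ≤ (i:ℝ) := Nat.cast_nonneg i
        linarith
      · push_neg at h
        have : (m : ℝ) ≤ i := by exact_mod_cast h
        linarith
  refine le_trans ?_ h1
  rw [Finset.prod_ite, Finset.prod_const, Finset.prod_const]
  set k := (Finset.filter (fun i => i < m) (Finset.range n)).card with hk
  have hcard := Finset.card_filter_add_card_filter_not
    (s := Finset.range n) (p := fun i => i < m)
  simp only [Finset.card_range] at hcard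
  have hkn : k ≤ n := by omega
  have hcompl : (Finset.filter (fun i => ¬ i < m) (Finset.range n)).card = n - k := by
    omega
  have hkm : k ≤ m := by
    have hsub : Finset.filter (fun i => i < m) (Finset.range n) ⊆ Finset.range m := by
      intro i hi
      simp only [Finset.mem_filter, Finset.mem_range] at hi ⊢
      exact hi.2
    simpa using Finset.card_le_card hsub
  rw [hcompl]
  have heq : (μ / 2) ^ k * μ ^ (n - k) = ((2:ℝ)^k)⁻¹ * μ ^ n := by
    rw [div_pow, div_eq_mul_inv, mul_assoc, mul_comm ((2:ℝ)^k)⁻¹, ← mul_assoc,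
      ← pow_add, Nat.add_sub_cancel' hkn, mul_comm]
  rw [heq]
  have h2 : ((2:ℝ)^m)⁻¹ ≤ ((2:ℝ)^k)⁻¹ := by
    apply inv_anti₀ (by positivity)
    exact pow_le_pow_right₀ one_le_two hkm
  exact mul_le_mul_of_nonneg_right h2 (by positivity)

theorem stmt_8 (d q : ℕ) (hd : d ∈ ({1, 2, 4} : Set ℕ)) (lam : Fin q → ℕ)
    (hlam : Antitone lam) (μ : ℝ) (hμ : (d : ℝ) * ((q : ℝ) - 1 / 2) < μ) :
    ((2 : ℝ) ^ (d * q * (q - 1) / 2))⁻¹ * μ ^ (∑ j, lam j) ≤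
      genPochhammer d q μ lam := by
  rcases Nat.eq_zero_or_pos q with hq | hq
  · subst hq
    simp [genPochhammer]
  have hd1 : 1 ≤ d := by
    simp only [Set.mem_insert_iff, Set.mem_singleton_iff] at hd
    rcases hd with h | h | h <;> omega
  have hq1 : (1:ℝ) ≤ q := by exact_mod_cast hq
  have hd1' : (1:ℝ) ≤ d := by exact_mod_cast hd1
  have hμ0 : 0 < μ := by nlinarith
  have key : ∀ j : Fin q,
      ((2 : ℝ) ^ (d * (j : ℕ)))⁻¹ * μ ^ (lam j) ≤
        (ascPochhammer ℝ (lam j)).eval (μ - (d : ℝ) / 2 * (j : ℕ)) := by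
    intro j
    have hj : (j : ℕ) ≤ q - 1 := by have := j.isLt; omega
    have hj' : ((j : ℕ) : ℝ) ≤ (q : ℝ) - 1 := by
      have h := (Nat.cast_le (α := ℝ)).mpr hj
      rw [Nat.cast_sub hq] at h
      simpa using h
    have hj0 : (0:ℝ) ≤ ((j:ℕ):ℝ) := Nat.cast_nonneg _
    refine factor_bound μ _ hμ0 ?_ (d * (j:ℕ)) (lam j) ?_
    · nlinarith
    · have hcast : ((d * (j:ℕ) : ℕ) : ℝ) = (d:ℝ) * ((j:ℕ):ℝ) := by push_cast; ring
      rw [hcast]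
      nlinarith
  have hprod : ∏ j : Fin q, (((2 : ℝ) ^ (d * (j : ℕ)))⁻¹ * μ ^ (lam j)) ≤
      genPochhammer d q μ lam := by
    apply Finset.prod_le_prod
    · intro j _; positivity
    · intro j _; exact key j
  refine le_trans ?_ hprod
  rw [Finset.prod_mul_distrib, Finset.prod_inv_distrib, Finset.prod_pow_eq_pow_sum,
    Finset.prod_pow_eq_pow_sum]
  have hsum : ∑ j : Fin q, d * (j : ℕ) = d * (q * (q-1) / 2) := by
    rw [← Finset.mul_sum]
    congr 1
    rw [Fin.sum_univ_eq_sum_range (fun i => i) q, Finset.sum_range_id]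
  have hexp : d * q * (q - 1) / 2 = d * (q * (q - 1) / 2) := by
    have h2 : 2 ∣ q * (q - 1) := by
      rcases Nat.even_or_odd q with h | h
      · exact Dvd.dvd.mul_right h.two_dvd _
      · have he : Even (q - 1) := by
          rcases h with ⟨k, hk⟩; exact ⟨k, by omega⟩
        exact Dvd.dvd.mul_left he.two_dvd _
    rw [mul_assoc, Nat.mul_div_assoc d h2]
  rw [hsum, hexp]
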